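/- Existence of a stabbing heterogeneous column: if C is a set of at least two shifted copies of an aperiodic pattern p of length m, all with shifts in [0, m/2], then there exists an absolute position covered by every copy in C at which not all copies of C have the same character. -/
import Mathlib


def Aperiodic {α : Type*} {m : ℕ} (p : Fin m → α) : Prop :=
  ∀ d, 1 ≤ d → d ≤ m / 2 → ∃ k, ∃ hk : k < m, d ≤ k ∧ p ⟨k, hk⟩ ≠ p ⟨k - d, by omega⟩

/-- Existence of a stabbing heterogeneous column: given at least two shifted
copies of an aperiodic pattern `p` (all shifts in `[0, m/2]`), there is an
absolute position covered by every copy where not all copies agree. -/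
theorem exists_stabbing_heterogeneous_column {α : Type*} {m : ℕ}
    (p : Fin m → α) (hap : Aperiodic p) (C : Finset ℕ)
    (hcard : 2 ≤ C.card) (hsh : ∀ s ∈ C, s ≤ m / 2) :
    ∃ j, (∀ s ∈ C, s ≤ j ∧ j < s + m) ∧
      ∃ s ∈ C, ∃ s' ∈ C, ∃ (h : j - s < m) (h' : j - s' < m),
        p ⟨j - s, h⟩ ≠ p ⟨j - s', h'⟩ := by
  have hne : C.Nonempty := Finset.card_pos.mp (by omega)
  set s0 := C.min' hne with hs0
  set s1 := C.max' hne with hs1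
  have hs0m : s0 ∈ C := C.min'_mem hne
  have hs1m : s1 ∈ C := C.max'_mem hne
  have hlt : s0 < s1 := C.min'_lt_max'_of_card (by omega)
  have hle : s1 ≤ m / 2 := hsh _ hs1m
  obtain ⟨k, hk, hdk, hpk⟩ := hap (s1 - s0) (by omega) (by omega)
  refine ⟨s0 + k, ?_, s0, hs0m, s1, hs1m, ?_, ?_, ?_⟩
  · intro s hs
    have h1 := C.min'_le s hs
    have h2 := C.le_max' s hs
    omega
  · omega
  · omega
  · have e1 : s0 + k - s0 = k := by omega
    have e2 : s0 + k - s1 = k - (s1 - s0) := by omega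
    simp only [e1, e2]
    exact hpk
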